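/- arXiv:0912.4598 — 2 statements merged into one kernel-verified Lean document; each statement's English description precedes it below -/
import Mathlib

section
/- If y ∈ ℝ^n minimizes the sum-of-squared-distances function F, then there exist group elements g₁, …, g_N ∈ G such that ‖gᵢ xᵢ − y‖ = D(xᵢ, y) for every i (the tuple (g₁x₁, …, g_N x_N) is an optimal multiple alignment) and y is the arithmetic mean of the aligned representatives: y = (1/N) Σ_{i=1}^N gᵢ xᵢ. -/
open scoped BigOperators RealInnerProductSpace

/-- The graph distance `D(x, y) = min_{g ∈ G} ‖g x − y‖` on `ℝ^n`, where `G` is a finite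
subgroup of the group of linear isometries of `ℝ^n` (e.g. permutation matrices acting by
conjugation on vectorized graph attribute matrices). -/
noncomputable def grDist {n : ℕ}
    (G : Subgroup (EuclideanSpace ℝ (Fin n) ≃ₗᵢ[ℝ] EuclideanSpace ℝ (Fin n))) [Fintype G]
    (x y : EuclideanSpace ℝ (Fin n)) : ℝ :=
  Finset.univ.inf' Finset.univ_nonempty fun g : G => ‖g.val x - y‖

section Aux

variable {n : ℕ}
  (G : Subgroup (EuclideanSpace ℝ (Fin n) ≃ₗᵢ[ℝ] EuclideanSpace ℝ (Fin n))) [Fintype G]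

lemma grDist_nonneg (x y : EuclideanSpace ℝ (Fin n)) : 0 ≤ grDist G x y :=
  Finset.le_inf' _ _ fun _ _ => norm_nonneg _

lemma grDist_le (x y : EuclideanSpace ℝ (Fin n)) (g : G) :
    grDist G x y ≤ ‖g.val x - y‖ :=
  Finset.inf'_le _ (Finset.mem_univ g)

lemma grDist_inv_norm (x y : EuclideanSpace ℝ (Fin n)) (g : G) :
    ‖(g⁻¹ : G).val x - y‖ = ‖g.val y - x‖ := by
  have hkey : g.val ((g⁻¹ : G).val x - y) = x - g.val y := by
    rw [map_sub]; simp
  calc ‖(g⁻¹ : G).val x - y‖ = ‖g.val ((g⁻¹ : G).val x - y)‖ := (g.val.norm_map _).symm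
    _ = ‖x - g.val y‖ := by rw [hkey]
    _ = ‖g.val y - x‖ := norm_sub_rev _ _

lemma grDist_symm (x y : EuclideanSpace ℝ (Fin n)) : grDist G x y = grDist G y x := by
  have key : ∀ a b : EuclideanSpace ℝ (Fin n), grDist G a b ≤ grDist G b a := by
    intro a b
    obtain ⟨g, -, hg⟩ :=
      Finset.exists_mem_eq_inf' (Finset.univ_nonempty (α := G))
        (fun g : G => ‖g.val b - a‖)
    have h1 : grDist G b a = ‖g.val b - a‖ := hg
    rw [h1]
    calc grDist G a b ≤ ‖(g⁻¹ : G).val a - b‖ := grDist_le G a b g⁻¹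
      _ = ‖g.val b - a‖ := grDist_inv_norm G a b g
  exact le_antisymm (key x y) (key y x)

lemma mean_identity (N : ℕ) (hN : 0 < N) (a : Fin N → EuclideanSpace ℝ (Fin n))
    (z : EuclideanSpace ℝ (Fin n)) :
    ∑ i, ‖a i - z‖ ^ 2
      = ∑ i, ‖a i - (N : ℝ)⁻¹ • ∑ j, a j‖ ^ 2
        + (N : ℝ) * ‖z - (N : ℝ)⁻¹ • ∑ j, a j‖ ^ 2 := by
  set m : EuclideanSpace ℝ (Fin n) := (N : ℝ)⁻¹ • ∑ j, a j with hm
  have hNne : (N : ℝ) ≠ 0 := Nat.cast_ne_zero.mpr hN.ne'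
  have hNsmul : (N : ℝ) • m = ∑ j, a j := by
    rw [hm, smul_smul, mul_inv_cancel₀ hNne, one_smul]
  have hsum0 : ∑ i, (a i - m) = 0 := by
    rw [Finset.sum_sub_distrib, Finset.sum_const, Finset.card_univ, Fintype.card_fin,
      ← Nat.cast_smul_eq_nsmul ℝ N m, hNsmul, sub_self]
  have expand : ∀ i, ‖a i - z‖ ^ 2
      = ‖a i - m‖ ^ 2 + 2 * (inner ℝ (a i - m) (m - z) : ℝ) + ‖m - z‖ ^ 2 := by
    intro i
    have h : a i - z = (a i - m) + (m - z) := by abel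
    rw [h, norm_add_sq_real]
  calc ∑ i, ‖a i - z‖ ^ 2
      = ∑ i, (‖a i - m‖ ^ 2 + 2 * (inner ℝ (a i - m) (m - z) : ℝ) + ‖m - z‖ ^ 2) := by
        simp_rw [expand]
    _ = ∑ i, ‖a i - m‖ ^ 2 + (N : ℝ) * ‖z - m‖ ^ 2 := by
        rw [Finset.sum_add_distrib, Finset.sum_add_distrib, ← Finset.mul_sum, ← sum_inner,
          hsum0, inner_zero_left, Finset.sum_const, Finset.card_univ, Fintype.card_fin,
          nsmul_eq_mul, norm_sub_rev m z]
        ring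

end Aux

/-- if `y` minimizes the sum-of-squared-distances function `F`, then there
are group elements `gᵢ ∈ G` realizing the distances (`‖gᵢ xᵢ − y‖ = D(xᵢ, y)`, an optimal
multiple alignment), and `y` is the arithmetic mean of the aligned representatives. -/
theorem sample_mean_is_mean_of_optimal_alignment {n : ℕ}
    (G : Subgroup (EuclideanSpace ℝ (Fin n) ≃ₗᵢ[ℝ] EuclideanSpace ℝ (Fin n))) [Fintype G]
    (N : ℕ) (hN : 0 < N) (x : Fin N → EuclideanSpace ℝ (Fin n))
    (y : EuclideanSpace ℝ (Fin n))
    (hmin : ∀ z : EuclideanSpace ℝ (Fin n),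
      (1 / 2 : ℝ) * ∑ i, grDist G y (x i) ^ 2 ≤ (1 / 2 : ℝ) * ∑ i, grDist G z (x i) ^ 2) :
    ∃ g : Fin N → G,
      (∀ i, ‖(g i).val (x i) - y‖ = grDist G (x i) y) ∧
      y = (N : ℝ)⁻¹ • ∑ i, (g i).val (x i) := by
  have hch : ∀ i : Fin N, ∃ g : G, ‖g.val (x i) - y‖ = grDist G (x i) y := by
    intro i
    obtain ⟨g, -, hg⟩ :=
      Finset.exists_mem_eq_inf' (Finset.univ_nonempty (α := G))
        (fun g : G => ‖g.val (x i) - y‖)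
    exact ⟨g, hg.symm⟩
  choose g hg using hch
  refine ⟨g, hg, ?_⟩
  set a : Fin N → EuclideanSpace ℝ (Fin n) := fun i => (g i).val (x i) with ha
  set m : EuclideanSpace ℝ (Fin n) := (N : ℝ)⁻¹ • ∑ j, a j with hm
  have hNpos : (0:ℝ) < N := Nat.cast_pos.mpr hN
  have hFy : ∀ i, grDist G y (x i) = ‖a i - y‖ := by
    intro i
    rw [grDist_symm, ← hg i]
  have hle : ∀ i, grDist G m (x i) ≤ ‖a i - m‖ := by
    intro i
    calc grDist G m (x i) ≤ ‖((g i)⁻¹ : G).val m - x i‖ := grDist_le G m (x i) ((g i)⁻¹)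
      _ = ‖(g i).val (x i) - m‖ := grDist_inv_norm G m (x i) (g i)
      _ = ‖a i - m‖ := rfl
  have hsum1 : ∑ i, ‖a i - y‖ ^ 2 ≤ ∑ i, grDist G m (x i) ^ 2 := by
    have := (mul_le_mul_iff_right₀ (by norm_num : (0:ℝ) < 1/2)).mp (hmin m)
    simpa [hFy] using this
  have hsum2 : ∑ i, grDist G m (x i) ^ 2 ≤ ∑ i, ‖a i - m‖ ^ 2 :=
    Finset.sum_le_sum fun i _ =>
      pow_le_pow_left₀ (grDist_nonneg G m (x i)) (hle i) 2
  have hfinal : ∑ i, ‖a i - y‖ ^ 2 ≤ ∑ i, ‖a i - m‖ ^ 2 := hsum1.trans hsum2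
  have hid := mean_identity N hN a y
  rw [← hm] at hid
  have hsq : (N : ℝ) * ‖y - m‖ ^ 2 ≤ 0 := by linarith
  have hsqle : ‖y - m‖ ^ 2 ≤ 0 := by nlinarith [sq_nonneg ‖y - m‖]
  have hsqeq : ‖y - m‖ ^ 2 = 0 := le_antisymm hsqle (sq_nonneg _)
  have hzero : ‖y - m‖ = 0 := by
    have := sq_eq_zero_iff.mp hsqeq
    exact this
  have : y - m = 0 := norm_eq_zero.mp hzero
  have hyeq : y = m := by rwa [sub_eq_zero] at this
  rw [hyeq, hm]
end

section
/- The sample mean problem is a discrete optimization problem over representative tuples: min_{y ∈ ℝ^n} (1/2) Σ_{i=1}^N D(y, xᵢ)² = min_{(g₁,…,g_N) ∈ G^N} (1/2) Σ_{i=1}^N ‖gᵢ xᵢ − m(g)‖², where m(g) = (1/N) Σ_{i=1}^N gᵢ xᵢ is the arithmetic mean of the chosen representatives. In particular the minimum of F is attained at the arithmetic mean of some tuple of representatives from the G-orbits of x₁, …, x_N. -/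
open scoped BigOperators RealInnerProductSpace

section Aux

variable {n : ℕ} (G : Subgroup (EuclideanSpace ℝ (Fin n) ≃ₗᵢ[ℝ] EuclideanSpace ℝ (Fin n)))
  [Fintype G]

lemma grDist_symm_le (x y : EuclideanSpace ℝ (Fin n)) : grDist G x y ≤ grDist G y x := by
  obtain ⟨h, -, hh⟩ := Finset.exists_mem_eq_inf' (Finset.univ_nonempty)
    (fun g : G => ‖g.val y - x‖)
  have hh' : grDist G y x = ‖h.val y - x‖ := hh
  have key : ‖h.val y - x‖ = ‖(h⁻¹ : G).val x - y‖ := by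
    have e1 : (h⁻¹ : G).val x - y = (h.val.symm : _) (x - h.val y) := by
      simp [map_sub]
    rw [e1, LinearIsometryEquiv.norm_map, norm_sub_rev]
  rw [hh', key]
  exact grDist_le G x y h⁻¹

lemma meanmin (N : ℕ) (hN : 0 < N) (v : Fin N → EuclideanSpace ℝ (Fin n))
    (y : EuclideanSpace ℝ (Fin n)) :
    ∑ i, ‖v i - (N : ℝ)⁻¹ • ∑ j, v j‖ ^ 2 ≤ ∑ i, ‖v i - y‖ ^ 2 := by
  set m : EuclideanSpace ℝ (Fin n) := (N : ℝ)⁻¹ • ∑ j, v j with hm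
  have hNne : (N : ℝ) ≠ 0 := Nat.cast_ne_zero.mpr hN.ne'
  have hsum : ∑ i, (v i - m) = 0 := by
    rw [Finset.sum_sub_distrib, Finset.sum_const, Finset.card_univ, Fintype.card_fin,
      sub_eq_zero, hm, ← Nat.cast_smul_eq_nsmul ℝ, smul_smul]
    rw [mul_inv_cancel₀ hNne, one_smul]
  have expand : ∀ i, ‖v i - y‖ ^ 2 = ‖v i - m‖ ^ 2 + 2 * (inner ℝ (v i - m) (m - y) : ℝ) + ‖m - y‖ ^ 2 := by
    intro i
    have h1 : v i - y = (v i - m) + (m - y) := by abel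
    rw [h1, norm_add_sq_real]
  have total : ∑ i, ‖v i - y‖ ^ 2
      = ∑ i, ‖v i - m‖ ^ 2 + (N : ℝ) * ‖m - y‖ ^ 2 := by
    simp_rw [expand]
    rw [Finset.sum_add_distrib, Finset.sum_add_distrib, ← Finset.mul_sum,
      ← sum_inner, hsum, inner_zero_left]
    simp [Finset.card_univ, mul_comm]
  rw [total]
  have : 0 ≤ (N : ℝ) * ‖m - y‖ ^ 2 := by positivity
  linarith

end Aux

/-- the sample-mean problem is a discrete optimization problem over tuples of
representatives: `min_y F(y) = min_{(g₁,…,g_N) ∈ G^N} (1/2) Σᵢ ‖gᵢ xᵢ − m(g)‖²`, where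
`m(g) = (1/N) Σᵢ gᵢ xᵢ`; in particular, the minimum of `F` is attained at the arithmetic
mean of some tuple of representatives from the `G`-orbits of the sample points. -/
theorem sample_mean_discrete_optimization {n : ℕ}
    (G : Subgroup (EuclideanSpace ℝ (Fin n) ≃ₗᵢ[ℝ] EuclideanSpace ℝ (Fin n))) [Fintype G]
    (N : ℕ) (hN : 0 < N) (x : Fin N → EuclideanSpace ℝ (Fin n)) :
    ∃ g : Fin N → G,
      (∀ y : EuclideanSpace ℝ (Fin n),
        (1 / 2 : ℝ) * ∑ i, grDist G ((N : ℝ)⁻¹ • ∑ j, (g j).val (x j)) (x i) ^ 2 ≤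
          (1 / 2 : ℝ) * ∑ i, grDist G y (x i) ^ 2) ∧
      ((1 / 2 : ℝ) * ∑ i, grDist G ((N : ℝ)⁻¹ • ∑ j, (g j).val (x j)) (x i) ^ 2 =
        (1 / 2 : ℝ) * ∑ i, ‖(g i).val (x i) - (N : ℝ)⁻¹ • ∑ j, (g j).val (x j)‖ ^ 2) ∧
      (∀ g' : Fin N → G,
        (1 / 2 : ℝ) * ∑ i, grDist G ((N : ℝ)⁻¹ • ∑ j, (g j).val (x j)) (x i) ^ 2 ≤
          (1 / 2 : ℝ) * ∑ i, ‖(g' i).val (x i) - (N : ℝ)⁻¹ • ∑ j, (g' j).val (x j)‖ ^ 2) := by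
  classical
  set m : (Fin N → G) → EuclideanSpace ℝ (Fin n) :=
    fun h => (N : ℝ)⁻¹ • ∑ j, (h j).val (x j) with hm
  set H : (Fin N → G) → ℝ := fun h => ∑ i, ‖(h i).val (x i) - m h‖ ^ 2 with hH
  obtain ⟨g, -, hg⟩ := Finset.exists_min_image (Finset.univ : Finset (Fin N → G)) H
    Finset.univ_nonempty
  have lower : ∀ y, H g ≤ ∑ i, grDist G y (x i) ^ 2 := by
    intro y
    choose h _ hh using fun i => Finset.exists_mem_eq_inf'
      (Finset.univ_nonempty) (fun k : G => ‖k.val (x i) - y‖)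
    have e : ∀ i, grDist G y (x i) = ‖(h i).val (x i) - y‖ := by
      intro i; rw [grDist_symm]; exact hh i
    calc H g ≤ H h := hg h (Finset.mem_univ h)
      _ ≤ ∑ i, ‖(h i).val (x i) - y‖ ^ 2 := meanmin N hN _ y
      _ = ∑ i, grDist G y (x i) ^ 2 := by simp_rw [e]
  have upper : ∑ i, grDist G (m g) (x i) ^ 2 ≤ H g := by
    apply Finset.sum_le_sum
    intro i _
    have h1 : grDist G (m g) (x i) ≤ ‖(g i).val (x i) - m g‖ := by
      rw [grDist_symm]; exact grDist_le G (x i) (m g) (g i)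
    exact pow_le_pow_left₀ (grDist_nonneg G _ _) h1 2
  have eqF : ∑ i, grDist G (m g) (x i) ^ 2 = H g := le_antisymm upper (lower (m g))
  refine ⟨g, ?_, ?_, ?_⟩
  · intro y
    have := lower y
    have h2 : (∑ i, grDist G (m g) (x i) ^ 2) ≤ ∑ i, grDist G y (x i) ^ 2 := eqF ▸ this
    linarith
  · rw [show ((N : ℝ)⁻¹ • ∑ j, (g j).val (x j)) = m g from rfl, eqF]
  · intro g'
    have h3 : H g ≤ H g' := hg g' (Finset.mem_univ g')
    have h4 : (∑ i, grDist G (m g) (x i) ^ 2) ≤ H g' := eqF ▸ h3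
    simp only [hH, hm] at h4 ⊢
    linarith
end
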